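/- Let D ⊆ 𝔽₂^{2n} be a cyclic code and D^⊥ its Euclidean dual. Define Φ : 𝔽₂^{2n} → 𝔽₂ⁿ by Φ(a)ᵢ = aᵢ + a_{n+i}. Then for all a ∈ D and b ∈ D^⊥, Φ(a)·Φ(b) = 0 in 𝔽₂. -/

import Mathlib

open scoped BigOperators

abbrev F2 := ZMod 2
abbrev F4 := GaloisField 2 2

noncomputable def iota : F2 →+* F4 := algebraMap F2 F4

/-- The trace map of `F4` over `F2`, viewed with values in `F4`: `tr α = α + α²`. -/
noncomputable def tr (a : F4) : F4 := a + a ^ 2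
/-- Cyclic shift: `(c₀,…,c_{m-1}) ↦ (c_{m-1},c₀,…,c_{m-2})`. -/
def cshift {α : Type*} {m : ℕ} (c : Fin m → α) : Fin m → α :=
  fun i => if _ : (i : ℕ) = 0 then c ⟨m - 1, by have := i.isLt; omega⟩
           else c ⟨(i : ℕ) - 1, by have := i.isLt; omega⟩

/-- Conjucyclic shift on `F4ⁿ`: `(c₀,…,c_{n-1}) ↦ (c̄_{n-1},c₀,…,c_{n-2})`,
where conjugation is `α ↦ α²`. -/
noncomputable def Tshift {n : ℕ} (c : Fin n → F4) : Fin n → F4 :=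
  fun i => if _ : (i : ℕ) = 0 then (c ⟨n - 1, by have := i.isLt; omega⟩) ^ 2
           else c ⟨(i : ℕ) - 1, by have := i.isLt; omega⟩

/-- The map `Ψ : F2^{2n} → F4ⁿ`, `Ψ(u)ᵢ = uᵢ + (uᵢ + u_{n+i})ω`. -/
noncomputable def Psi {n : ℕ} (ω : F4) (u : Fin (2 * n) → F2) : Fin n → F4 :=
  fun i => iota (u ⟨(i : ℕ), by have := i.isLt; omega⟩) +
    (iota (u ⟨(i : ℕ), by have := i.isLt; omega⟩) +
      iota (u ⟨n + (i : ℕ), by have := i.isLt; omega⟩)) * ω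

/-- Trace dual of a set of vectors in `F4ⁿ` w.r.t. `⟨x,y⟩ = Tr(∑ xᵢyᵢ)`. -/
noncomputable def traceDual {n : ℕ} (S : Set (Fin n → F4)) : Set (Fin n → F4) :=
  {x | ∀ c ∈ S, tr (∑ i, x i * c i) = 0}

/-- Euclidean dual of a set of vectors in `F2^m`. -/
def dualE {m : ℕ} (S : Set (Fin m → F2)) : Set (Fin m → F2) :=
  {b | ∀ a ∈ S, ∑ i, a i * b i = 0}

/-- The folding map `Φ : F2^{2n} → F2ⁿ`, `Φ(a)ᵢ = aᵢ + a_{n+i}`. -/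
def Phi {n : ℕ} (a : Fin (2 * n) → F2) : Fin n → F2 :=
  fun i => a ⟨(i : ℕ), by have := i.isLt; omega⟩ +
    a ⟨n + (i : ℕ), by have := i.isLt; omega⟩

/-- Coordinatewise trace of a vector in `F4ⁿ`. -/
noncomputable def trVec {n : ℕ} (c : Fin n → F4) : Fin n → F4 :=
  fun i => tr (c i)

lemma sub_one_val {m : ℕ} [NeZero m] (i : Fin m) :
    ((i - 1 : Fin m) : ℕ) = if (i : ℕ) = 0 then m - 1 else (i : ℕ) - 1 := by
  have hm : 0 < m := Nat.pos_of_ne_zero (NeZero.ne m)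
  have hi := i.isLt
  rw [Fin.sub_def]
  rcases Nat.lt_or_ge m 2 with h1 | h1
  · interval_cases m
    have h0 : (i:ℕ) = 0 := by omega
    simp [h0]
  · have h2 : (1 : Fin m).val = 1 := by
      rw [Fin.val_one' m]; exact Nat.mod_eq_of_lt (by omega)
    simp only [h2]
    split_ifs with h
    · simp only [h]
      exact Nat.mod_eq_of_lt (by omega)
    · have : m - 1 + (i:ℕ) = ((i:ℕ) - 1) + m := by omega
      rw [this, Nat.add_mod_right]
      exact Nat.mod_eq_of_lt (by omega)

lemma cshift_eq_sub {m : ℕ} [NeZero m] {α : Type*} (c : Fin m → α) (i : Fin m) :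
    cshift c i = c (i - 1) := by
  unfold cshift
  split_ifs with h <;> (congr 1; ext; rw [sub_one_val]; simp [h])

open Fin.NatCast in
lemma cshift_iter {m : ℕ} [NeZero m] {α : Type*} (k : ℕ) (c : Fin m → α) (i : Fin m) :
    (cshift^[k] c) i = c (i - (k : Fin m)) := by
  induction k generalizing i with
  | zero => simp
  | succ k ih =>
    rw [Function.iterate_succ_apply', cshift_eq_sub, ih]
    congr 1
    push_cast
    abel

/-- for a binary cyclic code `D` of length `2n`, `Φ(a)·Φ(b) = 0`
for all `a ∈ D`, `b ∈ D^⊥`. -/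
theorem stmt15 (n : ℕ) (D : Submodule F2 (Fin (2 * n) → F2))
    (hcyc : ∀ a ∈ D, cshift a ∈ D) :
    ∀ a ∈ D, ∀ b ∈ dualE (D : Set (Fin (2 * n) → F2)),
      ∑ i, Phi a i * Phi b i = 0 := by
  intro a ha b hb
  rcases Nat.eq_zero_or_pos n with hn | hn
  · subst hn; simp
  haveI : NeZero (2 * n) := ⟨by omega⟩
  have hiter : ∀ k, cshift^[k] a ∈ D := by
    intro k
    induction k with
    | zero => exact ha
    | succ k ih => rw [Function.iterate_succ_apply']; exact hcyc _ ih
  have hsplit : ∀ f : Fin (2 * n) → F2, ∑ i, f i =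
      (∑ i : Fin n, f ⟨(i : ℕ), by have := i.isLt; omega⟩) +
      (∑ i : Fin n, f ⟨n + (i : ℕ), by have := i.isLt; omega⟩) := by
    intro f
    rw [← (finCongr (show n + n = 2 * n by ring)).sum_comp, Fin.sum_univ_add]
    congr 1 <;> (apply Finset.sum_congr rfl; intro i _; congr 1)
  open Fin.NatCast in
  have key : ∀ i : Fin (2 * n), (cshift^[n] a) i = a (i + (n : Fin (2 * n))) := by
    intro i
    rw [cshift_iter]
    congr 1
    have hnn : (n : Fin (2 * n)) + (n : Fin (2 * n)) = 0 := by
      rw [← Nat.cast_add]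
      ext
      rw [Fin.val_natCast]
      simp [show n + n = 2 * n by ring]
    rw [sub_eq_iff_eq_add, add_assoc, hnn, add_zero]
  open Fin.NatCast in
  have hvaln : ((n : Fin (2 * n)) : ℕ) = n := by
    rw [Fin.val_natCast]; exact Nat.mod_eq_of_lt (by omega)
  have key1 : ∀ i : Fin n, (cshift^[n] a) ⟨(i : ℕ), by have := i.isLt; omega⟩ =
      a ⟨n + (i : ℕ), by have := i.isLt; omega⟩ := by
    intro i
    rw [key]
    congr 1
    ext
    simp only [Fin.add_def, hvaln]
    rw [Nat.mod_eq_of_lt (by have := i.isLt; omega)]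
    omega
  have key2 : ∀ i : Fin n, (cshift^[n] a) ⟨n + (i : ℕ), by have := i.isLt; omega⟩ =
      a ⟨(i : ℕ), by have := i.isLt; omega⟩ := by
    intro i
    rw [key]
    congr 1
    ext
    simp only [Fin.add_def, hvaln]
    have hi := i.isLt
    have : n + (i : ℕ) + n = (i : ℕ) + 2 * n := by omega
    rw [this, Nat.add_mod_right]
    exact Nat.mod_eq_of_lt (by omega)
  have h1 := hb a ha
  have h2 := hb _ (hiter n)
  rw [hsplit] at h1 h2
  simp only [key1, key2] at h2
  have expand : ∀ i : Fin n, Phi a i * Phi b i =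
      a ⟨(i : ℕ), by have := i.isLt; omega⟩ * b ⟨(i : ℕ), by have := i.isLt; omega⟩ +
      a ⟨(i : ℕ), by have := i.isLt; omega⟩ * b ⟨n + (i : ℕ), by have := i.isLt; omega⟩ +
      a ⟨n + (i : ℕ), by have := i.isLt; omega⟩ * b ⟨(i : ℕ), by have := i.isLt; omega⟩ +
      a ⟨n + (i : ℕ), by have := i.isLt; omega⟩ * b ⟨n + (i : ℕ), by have := i.isLt; omega⟩ := by
    intro i
    simp only [Phi]
    ring
  rw [Finset.sum_congr rfl (fun i _ => expand i)]
  simp only [Finset.sum_add_distrib]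
  linear_combination h1 + h2
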